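/- Let X be a real Banach space and A, B : X ⇉ X* maximal monotone with dom A ∩ int dom B ≠ ∅, A + N_{cl(dom B)} of type (FPV), and dom A ∩ cl(dom B) ⊆ dom B. Suppose 0 ∈ dom A ∩ int dom B, (0,0) ∈ gra A ∩ gra B, and (z,z*) ∈ dom F_{A+B}. Then for every λ ∈ (0,1), F_{A+B}(λz, λz*) ≥ λ²⟨z, z*⟩. -/

import Mathlib

open Set Filter Pointwise

noncomputable section

variable {X : Type*}

abbrev Dual' (X : Type*) [NormedAddCommGroup X] [NormedSpace ℝ X] := X →L[ℝ] ℝ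

section Defs
variable [NormedAddCommGroup X] [NormedSpace ℝ X]

/-- `A` is a monotone operator. -/
def MonotoneOp (A : X → Set (Dual' X)) : Prop :=
  ∀ x y (x' y' : Dual' X), x' ∈ A x → y' ∈ A y → 0 ≤ (x' - y') (x - y)

/-- `A` is maximal monotone: monotone, and every monotonically related pair is in the graph. -/
def MaxMonotone (A : X → Set (Dual' X)) : Prop :=
  MonotoneOp A ∧
    ∀ x (x' : Dual' X), (∀ y y', y' ∈ A y → 0 ≤ (x' - y') (x - y)) → x' ∈ A x

/-- domain of a set-valued operator -/
def domOp (A : X → Set (Dual' X)) : Set X := {x | (A x).Nonempty}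

/-- pointwise Minkowski sum of two set-valued operators -/
def opSum (A B : X → Set (Dual' X)) : X → Set (Dual' X) := fun x => A x + B x

/-- normal cone operator of a set `C` -/
def normalCone (C : Set X) : X → Set (Dual' X) :=
  fun x => {x' | x ∈ C ∧ ∀ c ∈ C, x' (c - x) ≤ 0}

/-- the Fitzpatrick function of `A` -/
def fitz (A : X → Set (Dual' X)) : X × Dual' X → EReal :=
  fun p => ⨆ q ∈ {q : X × Dual' X | q.2 ∈ A q.1},
    ((q.2 p.1 + p.2 q.1 - q.2 q.1 : ℝ) : EReal)

/-- `A` is maximal monotone of type (FPV) -/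
def FPV (A : X → Set (Dual' X)) : Prop :=
  MaxMonotone A ∧
    ∀ U : Set X, IsOpen U → Convex ℝ U → (U ∩ domOp A).Nonempty →
      ∀ x (x' : Dual' X), x ∈ U →
        (∀ y y', y' ∈ A y → y ∈ U → 0 ≤ (x' - y') (x - y)) → x' ∈ A x

/-- `A` is a linear relation: its graph is a linear subspace of `X × X*` -/
def LinearRel (A : X → Set (Dual' X)) : Prop :=
  (0 : Dual' X) ∈ A 0 ∧
  (∀ x y (x' y' : Dual' X), x' ∈ A x → y' ∈ A y → x' + y' ∈ A (x + y)) ∧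
  (∀ (c : ℝ) x (x' : Dual' X), x' ∈ A x → c • x' ∈ A (c • x))

/-- subdifferential of an extended-real-valued function -/
def subdiff (f : X → EReal) : X → Set (Dual' X) :=
  fun x => {x' | ∀ y, ((x' (y - x) : ℝ) : EReal) + f x ≤ f y}

/-- `f` is proper: never `⊥` and not identically `⊤` -/
def ProperFun (f : X → EReal) : Prop := (∀ x, f x ≠ ⊥) ∧ ∃ x, f x ≠ ⊤

/-- convexity for extended-real-valued functions -/
def EConvexOn (f : X → EReal) : Prop :=
  ∀ x y (t : ℝ), 0 ≤ t → t ≤ 1 →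
    f (t • x + (1 - t) • y) ≤ (t : EReal) * f x + ((1 - t : ℝ) : EReal) * f y

/-- effective domain of an extended-real-valued function -/
def domFun (f : X → EReal) : Set X := {x | f x ≠ ⊤}

end Defs

section Helpers
variable [NormedAddCommGroup X] [NormedSpace ℝ X]

lemma term_le_fitz (T : X → Set (Dual' X)) (p q : X × Dual' X) (hq : q.2 ∈ T q.1) :
    ((q.2 p.1 + p.2 q.1 - q.2 q.1 : ℝ) : EReal) ≤ fitz T p :=
  le_iSup₂ (f := fun (q : X × Dual' X) (_ : q ∈ {q : X × Dual' X | q.2 ∈ T q.1}) =>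
    ((q.2 p.1 + p.2 q.1 - q.2 q.1 : ℝ) : EReal)) q hq

lemma zero_mem_opSum {A B : X → Set (Dual' X)} (h0A : (0 : Dual' X) ∈ A 0)
    (h0B : (0 : Dual' X) ∈ B 0) : (0 : Dual' X) ∈ opSum A B 0 := by
  have := Set.add_mem_add h0A h0B
  simpa [opSum] using this

lemma fitz_real_bound (T : X → Set (Dual' X)) (p : X × Dual' X)
    (h0 : (0 : Dual' X) ∈ T 0) (htop : fitz T p ≠ ⊤) :
    ∃ M : ℝ, ∀ q : X × Dual' X, q.2 ∈ T q.1 → q.2 p.1 + p.2 q.1 - q.2 q.1 ≤ M := by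
  have hbot : ((0 : ℝ) : EReal) ≤ fitz T p := by
    have := term_le_fitz T p (0, (0 : Dual' X)) h0
    simpa using this
  have hne : fitz T p ≠ ⊥ := fun h => by simp [h] at hbot
  refine ⟨(fitz T p).toReal, fun q hq => ?_⟩
  have h1 := term_le_fitz T p q hq
  have h2 : fitz T p = (((fitz T p).toReal : ℝ) : EReal) := (EReal.coe_toReal htop hne).symm
  rw [h2] at h1
  exact_mod_cast h1

/-- absorption of normal-cone elements into a maximal monotone operator -/
lemma absorb {B : X → Set (Dual' X)} (hB : MaxMonotone B) {a : X} {b n : Dual' X}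
    (hb : b ∈ B a) (hn : n ∈ normalCone (closure (domOp B)) a) : b + n ∈ B a := by
  refine hB.2 a (b + n) (fun y y' hy' => ?_)
  have h1 : 0 ≤ (b - y') (a - y) := hB.1 a y b y' hb hy'
  have h2 : n (y - a) ≤ 0 := hn.2 y (subset_closure ⟨y', hy'⟩)
  have h3 : (b + n - y') (a - y) = (b - y') (a - y) + n (a - y) := by
    simp only [ContinuousLinearMap.sub_apply, ContinuousLinearMap.add_apply]; ring
  have h4 : n (a - y) = - n (y - a) := by
    rw [← map_neg]; congr 1; abel
  rw [h3, h4]; linarith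

end Helpers
set_option maxHeartbeats 1000000

section Baire
variable [NormedAddCommGroup X] [NormedSpace ℝ X]

/-- auxiliary boundedness predicate (sublevel of the convex sup-function) -/
def Pbd (B : X → Set (Dual' X)) (R m : ℝ) (x : X) : Prop :=
  ∀ y (y' : Dual' X), y' ∈ B y → ‖y‖ ≤ R → y' (x - y) ≤ m

/-- effective domain of the sup-function -/
def Gset (B : X → Set (Dual' X)) (R : ℝ) : Set X := {x | ∃ m, Pbd B R m x}

lemma Pbd_mono {B : X → Set (Dual' X)} {R m m' : ℝ} {x : X} (h : Pbd B R m x)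
    (hm : m ≤ m') : Pbd B R m' x := fun y y' hy' hyR => (h y y' hy' hyR).trans hm

lemma Pbd_combo {B : X → Set (Dual' X)} {R m m' : ℝ} {x x' : X} {t : ℝ}
    (hx : Pbd B R m x) (hx' : Pbd B R m' x') (ht0 : 0 ≤ t) (ht1 : t ≤ 1) :
    Pbd B R (t * m + (1 - t) * m') (t • x + (1 - t) • x') := by
  intro y y' hy' hyR
  have hid : t • x + (1 - t) • x' - y = t • (x - y) + (1 - t) • (x' - y) := by
    module
  rw [hid, map_add, map_smul, map_smul, smul_eq_mul, smul_eq_mul]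
  have := hx y y' hy' hyR
  have := hx' y y' hy' hyR
  nlinarith

lemma Gset_convex (B : X → Set (Dual' X)) (R : ℝ) : Convex ℝ (Gset B R) := by
  intro x hx y hy a b ha hb hab
  obtain ⟨m, hm⟩ := hx
  obtain ⟨m', hm'⟩ := hy
  have hb' : b = 1 - a := by linarith
  subst hb'
  exact ⟨a * m + (1 - a) * m', Pbd_combo hm hm' ha (by linarith)⟩

lemma domOp_subset_Gset {B : X → Set (Dual' X)} (hmono : MonotoneOp B) (R : ℝ) :
    domOp B ⊆ Gset B R := by
  rintro x ⟨x', hx'⟩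
  refine ⟨‖x'‖ * (‖x‖ + R), fun y y' hy' hyR => ?_⟩
  have h1 : 0 ≤ (x' - y') (x - y) := hmono x y x' y' hx' hy'
  have h2 : y' (x - y) ≤ x' (x - y) := by
    simp only [ContinuousLinearMap.sub_apply] at h1; linarith
  have h3 : x' (x - y) ≤ ‖x'‖ * ‖x - y‖ := by
    calc x' (x - y) ≤ ‖x' (x - y)‖ := le_abs_self _
    _ ≤ ‖x'‖ * ‖x - y‖ := x'.le_opNorm _
  have h4 : ‖x - y‖ ≤ ‖x‖ + R := (norm_sub_le _ _).trans (by linarith)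
  have h5 : ‖x'‖ * ‖x - y‖ ≤ ‖x'‖ * (‖x‖ + R) :=
    mul_le_mul_of_nonneg_left h4 (norm_nonneg _)
  linarith

lemma Pbd_isClosed (B : X → Set (Dual' X)) (R m : ℝ) : IsClosed {x : X | Pbd B R m x} := by
  have : {x : X | Pbd B R m x} =
      ⋂ (y : X), ⋂ (y' : Dual' X), ⋂ (_ : y' ∈ B y), ⋂ (_ : ‖y‖ ≤ R),
        {x : X | y' (x - y) ≤ m} := by
    ext x; simp [Pbd, Set.mem_iInter]
  rw [this]
  refine isClosed_iInter fun y => isClosed_iInter fun y' =>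
    isClosed_iInter fun _ => isClosed_iInter fun _ => ?_
  exact isClosed_le (y'.continuous.comp (continuous_id.sub continuous_const)) continuous_const

lemma loc_bound [CompleteSpace X] {B : X → Set (Dual' X)} (hmono : MonotoneOp B)
    {ρ R : ℝ} (hρ : 0 < ρ) (hball : Metric.ball (0 : X) ρ ⊆ domOp B) {x₁ : X}
    (hx₁ : x₁ ∈ interior (Gset B R)) (hR : ‖x₁‖ + 1 ≤ R) :
    ∃ ε K : ℝ, 0 < ε ∧ ε ≤ 1 ∧ 0 ≤ K ∧
      ∀ y (y' : Dual' X), y' ∈ B y → ‖y - x₁‖ < ε → ‖y'‖ ≤ K := by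
  classical
  set Q : Set X := Metric.closedBall (0 : X) (ρ / 2) with hQdef
  haveI : CompleteSpace Q := Metric.isClosed_closedBall.completeSpace_coe
  haveI : Nonempty Q := ⟨⟨0, by simp [hQdef]; positivity⟩⟩
  set CC : ℕ → Set Q := fun m => {q : Q | Pbd B R (m : ℝ) q.val} with hCCdef
  have hCc : ∀ m, IsClosed (CC m) := fun m =>
    (Pbd_isClosed B R (m : ℝ)).preimage continuous_subtype_val
  have hcov : ⋃ m, CC m = Set.univ := by
    ext q
    simp only [Set.mem_iUnion, Set.mem_univ, iff_true, hCCdef, Set.mem_setOf_eq]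
    have hq : q.val ∈ domOp B := by
      apply hball
      have h2 : dist (q.val) (0 : X) ≤ ρ / 2 := Metric.mem_closedBall.mp q.2
      rw [Metric.mem_ball]
      linarith
    obtain ⟨x', hx'⟩ := hq
    have hP : Pbd B R (‖x'‖ * (‖q.val‖ + R)) q.val := by
      obtain ⟨m, hm⟩ := domOp_subset_Gset hmono R ⟨x', hx'⟩
      intro y y' hy' hyR
      have h1 : 0 ≤ (x' - y') (q.val - y) := hmono q.val y x' y' hx' hy'
      have h2 : y' (q.val - y) ≤ x' (q.val - y) := by
        simp only [ContinuousLinearMap.sub_apply] at h1; linarith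
      have h3 : x' (q.val - y) ≤ ‖x'‖ * ‖q.val - y‖ :=
        (le_abs_self _).trans (x'.le_opNorm _)
      have h4 : ‖x'‖ * ‖q.val - y‖ ≤ ‖x'‖ * (‖q.val‖ + R) :=
        mul_le_mul_of_nonneg_left ((norm_sub_le _ _).trans (by linarith)) (norm_nonneg _)
      linarith
    exact ⟨⌈‖x'‖ * (‖q.val‖ + R)⌉₊, Pbd_mono hP (Nat.le_ceil _)⟩
  obtain ⟨m, q₀, hq₀⟩ := nonempty_interior_of_iUnion_of_closed hCc hcov
  obtain ⟨t, ht, htball⟩ := Metric.mem_nhds_iff.mp (mem_interior_iff_mem_nhds.mp hq₀)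
  have hPball : ∀ x : X, x ∈ Q → dist x q₀.val < t → Pbd B R (m : ℝ) x := by
    intro x hxQ hxd
    have : (⟨x, hxQ⟩ : Q) ∈ Metric.ball q₀ t := by
      rw [Metric.mem_ball, Subtype.dist_eq]; exact hxd
    exact htball this

  -- Step 5: move the boundedness ball strictly inside
  have hq₀n : ‖q₀.val‖ ≤ ρ / 2 := by
    have := Metric.mem_closedBall.mp q₀.2
    simpa [dist_zero_right] using this
  set θ : ℝ := min (t / (2 * (ρ + 1))) (1 / 2) with hθdef
  have hθ0 : 0 < θ := by
    apply lt_min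
    · positivity
    · norm_num
  have hθ1 : θ ≤ 1 / 2 := min_le_right _ _
  have hθt : θ * ρ / 2 ≤ t / 4 := by
    have h1 : θ ≤ t / (2 * (ρ + 1)) := min_le_left _ _
    have h2 : θ * ρ ≤ (t / (2 * (ρ + 1))) * ρ := mul_le_mul_of_nonneg_right h1 hρ.le
    have h3 : (t / (2 * (ρ + 1))) * ρ ≤ t / 2 := by
      rw [div_mul_eq_mul_div, div_le_div_iff₀ (by positivity) (by norm_num)]
      nlinarith
    linarith
  set x₀ : X := (1 - θ) • q₀.val with hx₀def
  set ε₂ : ℝ := min (θ * ρ / 2) (t / 4) with hε₂def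
  have hε₂0 : 0 < ε₂ := lt_min (by positivity) (by positivity)
  have hPx₀ : ∀ x : X, ‖x - x₀‖ < ε₂ → Pbd B R (m : ℝ) x := by
    intro x hx
    have hxn : ‖x‖ ≤ ρ / 2 := by
      have h1 : ‖x‖ ≤ ‖x₀‖ + ε₂ := by
        have := norm_sub_norm_le x x₀
        linarith [this, (le_of_lt hx)]
      have h2 : ‖x₀‖ ≤ (1 - θ) * (ρ / 2) := by
        rw [hx₀def, norm_smul, Real.norm_eq_abs, abs_of_nonneg (by linarith)]
        nlinarith [norm_nonneg q₀.val]
      have h3 : ε₂ ≤ θ * ρ / 2 := min_le_left _ _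
      nlinarith
    have hxd : dist x q₀.val < t := by
      have h1 : dist x q₀.val ≤ ‖x - x₀‖ + ‖x₀ - q₀.val‖ := by
        rw [dist_eq_norm]
        have := norm_sub_le_norm_sub_add_norm_sub x x₀ q₀.val
        exact this
      have h2 : ‖x₀ - q₀.val‖ = θ * ‖q₀.val‖ := by
        rw [hx₀def]
        have : (1 - θ) • q₀.val - q₀.val = (-θ) • q₀.val := by module
        rw [this, norm_smul, Real.norm_eq_abs, abs_of_nonpos (by linarith)]
        ring
      have h3 : θ * ‖q₀.val‖ ≤ θ * (ρ / 2) := by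
        apply mul_le_mul_of_nonneg_left hq₀n hθ0.le
      have h4 : ε₂ ≤ t / 4 := min_le_right _ _
      have : dist x q₀.val < t / 4 + θ * ρ / 2 := by
        calc dist x q₀.val ≤ ‖x - x₀‖ + ‖x₀ - q₀.val‖ := h1
        _ < ε₂ + θ * (ρ / 2) := by linarith [hx, h2 ▸ h3]
        _ ≤ t / 4 + θ * ρ / 2 := by linarith
      linarith
    apply hPball x _ hxd
    exact Metric.mem_closedBall.mpr (by rwa [dist_zero_right])
  -- Step 6: propagate the bound to a neighbourhood of `x₁`
  obtain ⟨r₁, hr₁0, hr₁⟩ := Metric.mem_nhds_iff.mp (mem_interior_iff_mem_nhds.mp hx₁)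
  set ν : ℝ := r₁ / (2 * (‖x₁ - x₀‖ + 1)) with hνdef
  have hν0 : 0 < ν := by positivity
  set x₂ : X := x₁ + ν • (x₁ - x₀) with hx₂def
  have hx₂G : x₂ ∈ Gset B R := by
    apply hr₁
    rw [Metric.mem_ball, dist_eq_norm]
    have h1 : x₂ - x₁ = ν • (x₁ - x₀) := by rw [hx₂def]; abel
    rw [h1, norm_smul, Real.norm_eq_abs, abs_of_pos hν0]
    calc ν * ‖x₁ - x₀‖ ≤ ν * (‖x₁ - x₀‖ + 1) := by nlinarith
    _ = r₁ / 2 := by rw [hνdef]; field_simp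
    _ < r₁ := by linarith
  obtain ⟨m₂, hm₂⟩ := hx₂G
  set ε₃ : ℝ := (ν / (1 + ν)) * ε₂ with hε₃def
  have h1ν : (0:ℝ) < 1 + ν := by linarith
  have hε₃0 : 0 < ε₃ := by positivity
  set M₁ : ℝ := max ((1 / (1 + ν)) * m₂ + (ν / (1 + ν)) * (m : ℝ)) 0 with hM₁def
  have hM₁0 : 0 ≤ M₁ := le_max_right _ _
  have hcomb : ∀ x : X, ‖x - x₁‖ < ε₃ → Pbd B R M₁ x := by
    intro x hx
    set w : X := x₀ + ((1 + ν) / ν) • (x - x₁) with hwdef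
    have hw : ‖w - x₀‖ < ε₂ := by
      have h1 : w - x₀ = ((1 + ν) / ν) • (x - x₁) := by rw [hwdef]; abel
      rw [h1, norm_smul, Real.norm_eq_abs, abs_of_pos (by positivity)]
      rw [hε₃def] at hx
      have h2 : ((1 + ν) / ν) * ‖x - x₁‖ < ((1 + ν) / ν) * ((ν / (1 + ν)) * ε₂) :=
        mul_lt_mul_of_pos_left hx (by positivity)
      have h3 : ((1 + ν) / ν) * ((ν / (1 + ν)) * ε₂) = ε₂ := by field_simp
      linarith
    have hPw : Pbd B R (m : ℝ) w := hPx₀ w hw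
    have hkey : x = (1 / (1 + ν)) • x₂ + (1 - 1 / (1 + ν)) • w := by
      rw [hx₂def, hwdef]
      have hν' : ν ≠ 0 := ne_of_gt hν0
      have h1ν' : (1:ℝ) + ν ≠ 0 := ne_of_gt h1ν
      match_scalars <;> field_simp <;> ring
    have := Pbd_combo hm₂ hPw (t := 1 / (1 + ν)) (by positivity)
      (by rw [div_le_one h1ν]; linarith)
    rw [← hkey] at this
    apply Pbd_mono this
    rw [hM₁def]
    apply le_max_left _ _ |>.trans_eq' ?_
    have : (1:ℝ) - 1 / (1 + ν) = ν / (1 + ν) := by field_simp; ring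
    rw [this]
  -- Step 7: extract the operator-norm bound
  refine ⟨min (ε₃ / 2) 1, 4 * (M₁ + 1) / ε₃, lt_min (by positivity) one_pos,
    min_le_right _ _, by positivity, ?_⟩
  intro y y' hy' hyd
  have hyd' : ‖y - x₁‖ < ε₃ / 2 := lt_of_lt_of_le hyd (min_le_left _ _)
  have hyR : ‖y‖ ≤ R := by
    have h1 : ‖y‖ ≤ ‖x₁‖ + ‖y - x₁‖ := by
      have := norm_sub_norm_le y x₁; linarith
    have h2 : ‖y - x₁‖ ≤ 1 := (lt_of_lt_of_le hyd (min_le_right _ _)).le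
    linarith
  have hsmall : ∀ u : X, ‖u‖ < ε₃ / 2 → y' u ≤ M₁ := by
    intro u hu
    have hx : ‖(y + u) - x₁‖ < ε₃ := by
      have := norm_add_le (y - x₁) u
      have h2 : (y + u) - x₁ = (y - x₁) + u := by abel
      rw [h2]
      linarith
    have := hcomb (y + u) hx y y' hy' hyR
    simpa using this
  refine ContinuousLinearMap.opNorm_le_bound _ (by positivity) (fun v => ?_)
  rcases eq_or_ne v 0 with rfl | hv
  · simp
  · have hnv : 0 < ‖v‖ := norm_pos_iff.mpr hv
    set u : X := (ε₃ / (4 * ‖v‖)) • v with hudef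
    have hun : ‖u‖ = ε₃ / 4 := by
      rw [hudef, norm_smul, Real.norm_eq_abs, abs_of_pos (by positivity)]
      field_simp
    have hu2 : ‖u‖ < ε₃ / 2 := by rw [hun]; linarith
    have hun2 : ‖-u‖ < ε₃ / 2 := by rwa [norm_neg]
    have h1 : y' u ≤ M₁ := hsmall u hu2
    have h2 : y' (-u) ≤ M₁ := hsmall (-u) hun2
    have h3 : |y' u| ≤ M₁ := by
      have hneg : y' (-u) = - y' u := map_neg _ u
      rw [hneg] at h2
      exact abs_le.mpr ⟨by linarith, h1⟩
    have h4 : y' v = (4 * ‖v‖ / ε₃) * y' u := by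
      rw [hudef, map_smul, smul_eq_mul]
      field_simp
    rw [Real.norm_eq_abs, h4, abs_mul, abs_of_pos (by positivity)]
    calc 4 * ‖v‖ / ε₃ * |y' u| ≤ 4 * ‖v‖ / ε₃ * (M₁ + 1) := by
          apply mul_le_mul_of_nonneg_left (by linarith) (by positivity)
    _ = 4 * (M₁ + 1) / ε₃ * ‖v‖ := by ring


end Baire
section Blob
variable [NormedAddCommGroup X] [NormedSpace ℝ X]

lemma isOpen_convexJoin_of_isOpen {s t : Set X} (hs : IsOpen s) (ht : IsOpen t) :
    IsOpen (convexJoin ℝ s t) := by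
  rw [Metric.isOpen_iff]
  intro x hx
  rw [mem_convexJoin] at hx
  obtain ⟨a, ha, b, hb, p, q, hp, hq, hpq, hx⟩ := hx
  rcases eq_or_lt_of_le hp with hp0 | hp0
  · have hq1 : q = 1 := by linarith
    obtain ⟨δ, hδ0, hδ⟩ := Metric.isOpen_iff.mp ht b hb
    have hxb : x = b := by rw [← hx, ← hp0, hq1]; simp
    refine ⟨δ, hδ0, fun v hv => ?_⟩
    rw [mem_convexJoin]
    refine ⟨a, ha, v, hδ (by rwa [hxb] at hv), 0, 1, le_refl _, zero_le_one, by ring, by simp⟩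
  · obtain ⟨δ, hδ0, hδ⟩ := Metric.isOpen_iff.mp hs a ha
    refine ⟨p * δ, by positivity, fun v hv => ?_⟩
    rw [mem_convexJoin]
    refine ⟨a + p⁻¹ • (v - x), ?_, b, hb, p, q, hp, hq, hpq, ?_⟩
    · apply hδ
      rw [Metric.mem_ball, dist_eq_norm]
      have h1 : a + p⁻¹ • (v - x) - a = p⁻¹ • (v - x) := by abel
      rw [h1, norm_smul, Real.norm_eq_abs, abs_of_pos (by positivity)]
      rw [Metric.mem_ball, dist_eq_norm] at hv
      calc p⁻¹ * ‖v - x‖ < p⁻¹ * (p * δ) := by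
            exact mul_lt_mul_of_pos_left hv (by positivity)
      _ = δ := by field_simp
    · rw [← hx]
      have h1 : p • (a + p⁻¹ • (v - (p • a + q • b))) + q • b =
          (p • a + q • b) + (p * p⁻¹) • (v - (p • a + q • b)) := by
        rw [smul_add, smul_smul]; abel
      rw [h1, mul_inv_cancel₀ (ne_of_gt hp0), one_smul]; abel

lemma mem_domOp_opSum_normalCone {A B : X → Set (Dual' X)} {x : X}
    (hx : x ∈ domOp (opSum A (normalCone (closure (domOp B))))) :
    x ∈ domOp A ∧ x ∈ closure (domOp B) := by
  obtain ⟨v, hv⟩ := hx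
  rw [opSum, Set.mem_add] at hv
  obtain ⟨u, hu, n, hn, _⟩ := hv
  exact ⟨⟨u, hu⟩, hn.1⟩

lemma zero_mem_domT {A B : X → Set (Dual' X)} (h0A : (0 : Dual' X) ∈ A 0)
    (h0B : (0 : Dual' X) ∈ B 0) :
    (0 : X) ∈ domOp (opSum A (normalCone (closure (domOp B)))) := by
  refine ⟨0 + 0, Set.add_mem_add h0A ⟨subset_closure ⟨0, h0B⟩, fun c _ => by simp⟩⟩

lemma mem_closure_domT [CompleteSpace X] (A B : X → Set (Dual' X)) (hB : MaxMonotone B)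
    (hFPV : FPV (opSum A (normalCone (closure (domOp B)))))
    (hsub : domOp A ∩ closure (domOp B) ⊆ domOp B)
    (h0A : (0 : Dual' X) ∈ A 0) (h0B : (0 : Dual' X) ∈ B 0)
    {ρ₀ K₀ : ℝ} (hρ₀ : 0 < ρ₀) (hball : Metric.ball (0 : X) ρ₀ ⊆ domOp B)
    (hK₀0 : 0 ≤ K₀)
    (hK₀ : ∀ y (y' : Dual' X), y' ∈ B y → ‖y‖ < ρ₀ → ‖y'‖ ≤ K₀)
    (w : X) (w' : Dual' X) (M : ℝ)
    (hM : ∀ (a : X) (a' : Dual' X), a' ∈ opSum A B a → a' w + w' a - a' a ≤ M) :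
    w ∈ closure (domOp (opSum A (normalCone (closure (domOp B))))) := by
  by_contra hw
  have h0T : (0 : X) ∈ domOp (opSum A (normalCone (closure (domOp B)))) :=
    zero_mem_domT h0A h0B
  have hw0 : w ≠ 0 := fun h => hw (h ▸ subset_closure h0T)
  have hwn : 0 < ‖w‖ := norm_pos_iff.mpr hw0
  rw [Metric.mem_closure_iff] at hw
  push_neg at hw
  obtain ⟨ε₀', hε₀'0, hε₀'⟩ := hw
  set ε₀ : ℝ := min (ε₀' / 2) (‖w‖ / 4) with hε₀def
  have hε₀0 : 0 < ε₀ := lt_min (by positivity) (by positivity)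
  have hε₀w : ε₀ ≤ ‖w‖ / 4 := min_le_right _ _
  have hfar : ∀ y ∈ domOp (opSum A (normalCone (closure (domOp B)))), 2 * ε₀ ≤ dist w y := by
    intro y hy
    have h1 := hε₀' y hy
    have h2 : ε₀ ≤ ε₀' / 2 := min_le_left _ _
    linarith
  set ρ₁ : ℝ := min ρ₀ ‖w‖ with hρ₁def
  have hρ₁0 : 0 < ρ₁ := lt_min hρ₀ hwn
  have hρ₁w : ρ₁ ≤ ‖w‖ := min_le_right _ _
  have hρ₁ρ : ρ₁ ≤ ρ₀ := min_le_left _ _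
  set c₂ : ℝ := (3 / 2) * ε₀ / (ρ₁ / 2 + ‖w‖) with hc₂def
  have hden : 0 < ρ₁ / 2 + ‖w‖ := by positivity
  have hc₂0 : 0 < c₂ := by positivity
  have hc₂1 : c₂ ≤ 1 := by
    rw [hc₂def, div_le_one hden]
    nlinarith
  set rz : ℝ := min (min (ε₀ / 2) (c₂ * ρ₁ / 4)) (c₂ * ‖w‖ / 8) with hrzdef
  have hrz0 : 0 < rz := lt_min (lt_min (by positivity) (by positivity)) (by positivity)
  have hrz1 : rz ≤ ε₀ / 2 := le_trans (min_le_left _ _) (min_le_left _ _)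
  have hrz2 : rz ≤ c₂ * ρ₁ / 4 := le_trans (min_le_left _ _) (min_le_right _ _)
  have hrz3 : rz ≤ c₂ * ‖w‖ / 8 := min_le_right _ _
  have hrzw : rz ≤ ‖w‖ := by nlinarith
  set κ : ℝ := K₀ * (3 * ‖w‖ + ρ₁) with hκdef
  have hκ0 : 0 ≤ κ := by positivity
  set γ₀ : ℝ := 3 / 8 * c₂ * ‖w‖ with hγ₀def
  have hγ₀0 : 0 < γ₀ := by positivity
  obtain ⟨vs, hvs1, hvs2'⟩ := exists_dual_vector ℝ w (norm_ne_zero_iff.mpr hw0)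
  have hvs2 : vs w = ‖w‖ := by exact_mod_cast hvs2'
  set τ : ℝ := max 0 ((M + κ - w' w) / γ₀) with hτdef
  have hτ0 : 0 ≤ τ := le_max_left _ _
  have hτγ : M + κ - w' w ≤ τ * γ₀ := by
    rcases le_or_gt (M + κ - w' w) 0 with h | h
    · have : 0 ≤ τ * γ₀ := by positivity
      linarith
    · have h1 : τ = (M + κ - w' w) / γ₀ := max_eq_right (by positivity)
      rw [h1, div_mul_cancel₀ _ (ne_of_gt hγ₀0)]
  clear_value ε₀ ρ₁ c₂ rz κ γ₀ τ
  set U : Set X := convexJoin ℝ (Metric.ball (0 : X) (ρ₁ / 2)) (Metric.ball w rz) with hUdef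
  have hUopen : IsOpen U := isOpen_convexJoin_of_isOpen Metric.isOpen_ball Metric.isOpen_ball
  have hUconv : Convex ℝ U := (convex_ball _ _).convexJoin (convex_ball _ _)
  have h0ball : (0 : X) ∈ Metric.ball (0 : X) (ρ₁ / 2) := by
    simp [Metric.mem_ball]; positivity
  have hwball : w ∈ Metric.ball w rz := Metric.mem_ball_self hrz0
  have hUw : w ∈ U := by
    rw [hUdef, mem_convexJoin]
    exact ⟨0, h0ball, w, hwball, 0, 1, le_refl _, zero_le_one, by ring, by simp⟩
  have hU0 : (0 : X) ∈ U := by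
    rw [hUdef, mem_convexJoin]
    exact ⟨0, h0ball, w, hwball, 1, 0, zero_le_one, le_refl _, by ring, by simp⟩
  -- the key monotone-relatedness verification
  have hrel : ∀ y y', y' ∈ opSum A (normalCone (closure (domOp B))) y → y ∈ U →
      0 ≤ ((w' + τ • vs) - y') (w - y) := by
    intro y y' hy' hyU
    rw [hUdef, mem_convexJoin] at hyU
    obtain ⟨a, ha, b, hb, p, s, hp, hs, hps, hy⟩ := hyU
    rw [Metric.mem_ball, dist_zero_right] at ha
    rw [Metric.mem_ball, dist_eq_norm] at hb
    rw [opSum, Set.mem_add] at hy'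
    obtain ⟨u, hu, n, hn, huny⟩ := hy'
    have hyT : y ∈ domOp (opSum A (normalCone (closure (domOp B)))) :=
      ⟨y', by rw [opSum, Set.mem_add]; exact ⟨u, hu, n, hn, huny⟩⟩
    have hyB : y ∈ domOp B := hsub ⟨⟨u, hu⟩, hn.1⟩
    obtain ⟨bb, hbb⟩ := hyB
    have habs : bb + n ∈ B y := absorb hB hbb hn
    have hgr : u + (bb + n) ∈ opSum A B y := Set.add_mem_add hu habs
    have hMt := hM y (u + (bb + n)) hgr
    have hfary : 2 * ε₀ ≤ ‖w - y‖ := by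
      have := hfar y hyT
      rwa [dist_eq_norm] at this
    -- decomposition of w - y
    have hwy : w - y = p • (w - a) + s • (w - b) := by
      rw [← hy]; match_scalars <;> linarith
    have hnwy : ‖w - y‖ ≤ p * (‖w‖ + ρ₁ / 2) + s * rz := by
      rw [hwy]
      calc ‖p • (w - a) + s • (w - b)‖ ≤ ‖p • (w - a)‖ + ‖s • (w - b)‖ := norm_add_le _ _
      _ = p * ‖w - a‖ + s * ‖w - b‖ := by
            rw [norm_smul, norm_smul, Real.norm_eq_abs, Real.norm_eq_abs,
              abs_of_nonneg hp, abs_of_nonneg hs]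
      _ ≤ p * (‖w‖ + ρ₁ / 2) + s * rz := by
            have h1 : ‖w - a‖ ≤ ‖w‖ + ρ₁ / 2 := (norm_sub_le _ _).trans (by linarith)
            have h2 : ‖w - b‖ ≤ rz := by
              rw [← norm_neg]
              simpa [neg_sub] using hb.le
            have := mul_le_mul_of_nonneg_left h1 hp
            have := mul_le_mul_of_nonneg_left h2 hs
            linarith
    have hpc₂ : c₂ ≤ p := by
      rw [hc₂def, div_le_iff₀ hden]
      nlinarith
    -- (π): lower bound for bb (w - y)
    have hbw : -κ ≤ bb (w - y) := by
      by_cases hylt : ‖y‖ < ρ₁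
      · have hKb : ‖bb‖ ≤ K₀ := hK₀ y bb hbb (lt_of_lt_of_le hylt hρ₁ρ)
        have h1 : |bb (w - y)| ≤ ‖bb‖ * ‖w - y‖ := bb.le_opNorm _
        have h2 : ‖w - y‖ ≤ ‖w‖ + ρ₁ := (norm_sub_le _ _).trans (by linarith)
        have h3 : ‖bb‖ * ‖w - y‖ ≤ K₀ * (3 * ‖w‖ + ρ₁) := by
          apply mul_le_mul hKb (by linarith) (norm_nonneg _) hK₀0
        rw [hκdef]
        have := neg_abs_le (bb (w - y))
        linarith
      · push_neg at hylt
        have hs0 : 0 < s := by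
          rcases eq_or_lt_of_le hs with h | h
          · exfalso
            have hp1 : p = 1 := by linarith
            have hya : y = a := by rw [← hy, ← h, hp1]; simp
            rw [hya] at hylt
            linarith
          · exact h
        have hp0 : 0 < p := lt_of_lt_of_le hc₂0 hpc₂
        set pb : X := a + (s / p) • (b - w) with hpbdef
        have hμ : s / p ≤ 1 / c₂ := by
          rw [div_le_div_iff₀ hp0 hc₂0]
          nlinarith
        have hpbn : ‖pb‖ < ρ₀ := by
          have h1 : ‖pb‖ ≤ ‖a‖ + (s / p) * ‖b - w‖ := by
            rw [hpbdef]
            calc ‖a + (s / p) • (b - w)‖ ≤ ‖a‖ + ‖(s / p) • (b - w)‖ := norm_add_le _ _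
            _ = ‖a‖ + (s / p) * ‖b - w‖ := by
                rw [norm_smul, Real.norm_eq_abs, abs_of_nonneg (by positivity)]
          have h2 : (s / p) * ‖b - w‖ ≤ (1 / c₂) * rz := by
            apply mul_le_mul hμ hb.le (norm_nonneg _) (by positivity)
          have h3 : (1 / c₂) * rz ≤ ρ₁ / 4 := by
            rw [div_mul_eq_mul_div, one_mul, div_le_iff₀ hc₂0]
            nlinarith
          have h4 : ρ₁ / 2 + ρ₁ / 4 < ρ₀ := by nlinarith
          linarith
        have hpbB : pb ∈ domOp B := hball (by rwa [Metric.mem_ball, dist_zero_right])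
        obtain ⟨ws, hws⟩ := hpbB
        have hKws : ‖ws‖ ≤ K₀ := hK₀ pb ws hws hpbn
        have hmono0 : 0 ≤ (bb - ws) (y - pb) := hB.1 y pb bb ws hbb hws
        have hμp : (s / p) * p = s := by field_simp
        have hidp : p • (y - pb) = s • (w - y) := by
          rw [hpbdef, ← hy]
          match_scalars
          · linear_combination p * hps
          · linear_combination s * hps - hμp
          · linear_combination hμp
        have hscal : p * ((bb - ws) (y - pb)) = s * ((bb - ws) (w - y)) := by
          rw [← smul_eq_mul, ← smul_eq_mul, ← map_smul, ← map_smul, hidp]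
        have h4 : 0 ≤ (bb - ws) (w - y) := by
          have h41 : 0 ≤ s * ((bb - ws) (w - y)) := by
            rw [← hscal]; positivity
          exact (mul_nonneg_iff_of_pos_left hs0).mp h41
        have h5 : ws (w - y) ≤ bb (w - y) := by
          simp only [ContinuousLinearMap.sub_apply] at h4; linarith
        have h6 : |ws (w - y)| ≤ K₀ * ‖w - y‖ :=
          le_trans (ws.le_opNorm _) (mul_le_mul_of_nonneg_right hKws (norm_nonneg _))
        have h7 : ‖y‖ ≤ 2 * ‖w‖ + ρ₁ := by
          have h71 : ‖y‖ ≤ p * ‖a‖ + s * ‖b‖ := by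
            rw [← hy]
            calc ‖p • a + s • b‖ ≤ ‖p • a‖ + ‖s • b‖ := norm_add_le _ _
            _ = p * ‖a‖ + s * ‖b‖ := by
                rw [norm_smul, norm_smul, Real.norm_eq_abs, Real.norm_eq_abs,
                  abs_of_nonneg hp, abs_of_nonneg hs]
          have h72 : ‖b‖ ≤ ‖w‖ + rz := by
            have : ‖b‖ ≤ ‖b - w‖ + ‖w‖ := by
              have := norm_add_le (b - w) w
              simpa using this
            linarith
          have hp1 : p ≤ 1 := by linarith
          have hs1 : s ≤ 1 := by linarith
          have t1 : p * ‖a‖ ≤ 1 * (ρ₁ / 2) :=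
            mul_le_mul hp1 ha.le (norm_nonneg _) zero_le_one
          have t2 : s * ‖b‖ ≤ 1 * (‖w‖ + rz) :=
            mul_le_mul hs1 h72 (norm_nonneg _) zero_le_one
          have t3 : rz ≤ ‖w‖ := hrzw
          have t4 : ρ₁ / 2 ≤ ρ₁ := by linarith
          linarith
        have h8 : ‖w - y‖ ≤ 3 * ‖w‖ + ρ₁ := (norm_sub_le _ _).trans (by linarith)
        have h9 : K₀ * ‖w - y‖ ≤ κ := by
          rw [hκdef]
          exact mul_le_mul_of_nonneg_left h8 hK₀0
        have := neg_abs_le (ws (w - y))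
        linarith
    -- lower bound for vs (w - y)
    have hvwy : γ₀ ≤ vs (w - y) := by
      have hdec : vs (w - y) = p * vs (w - a) + s * vs (w - b) := by
        rw [hwy, map_add, map_smul, map_smul, smul_eq_mul, smul_eq_mul]
      have h1 : |vs a| ≤ ‖a‖ := by
        have := vs.le_opNorm a
        rwa [hvs1, one_mul, Real.norm_eq_abs] at this
      have h2 : |vs (w - b)| ≤ rz := by
        have h21 := vs.le_opNorm (w - b)
        rw [hvs1, one_mul, Real.norm_eq_abs] at h21
        have h22 : ‖w - b‖ ≤ rz := by
          rw [← norm_neg]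
          simpa [neg_sub] using hb.le
        linarith
      have h3 : ‖w‖ / 2 ≤ vs (w - a) := by
        rw [map_sub, hvs2]
        have h31 : vs a ≤ ‖a‖ := le_of_abs_le h1
        linarith [ha, hρ₁w]
      have h4 : -rz ≤ vs (w - b) := (abs_le.mp h2).1
      have hs1 : s ≤ 1 := by linarith
      rw [hγ₀def, hdec]
      have h5 : c₂ * (‖w‖ / 2) ≤ p * vs (w - a) := by
        apply mul_le_mul hpc₂ h3 (by positivity) (by linarith)
      have h61 : s * (-rz) ≤ s * vs (w - b) := mul_le_mul_of_nonneg_left h4 hs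
      have h62 : s * rz ≤ 1 * rz := mul_le_mul_of_nonneg_right hs1 hrz0.le
      linarith [h5, h61, h62, hrz3]
    -- conclusion of relatedness
    have hterm : (u + (bb + n)) (w - y) ≤ M - w' y := by
      rw [map_sub]; linarith
    have hun : (u + n) (w - y) ≤ M - w' y + κ := by
      have : (u + n) (w - y) = (u + (bb + n)) (w - y) - bb (w - y) := by
        simp only [ContinuousLinearMap.add_apply]; ring
      rw [this]
      linarith
    have hτv : M + κ - w' w ≤ τ * vs (w - y) := by
      have := mul_le_mul_of_nonneg_left hvwy hτ0
      linarith
    have hexp : ((w' + τ • vs) - y') (w - y) =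
        w' (w - y) + τ * vs (w - y) - (u + n) (w - y) := by
      rw [← huny]
      simp only [ContinuousLinearMap.sub_apply, ContinuousLinearMap.add_apply,
        ContinuousLinearMap.smul_apply, smul_eq_mul]
      try ring
    rw [hexp, map_sub]
    linarith
  -- apply (FPV)
  have hres := hFPV.2 U hUopen hUconv ⟨0, hU0, h0T⟩ w (w' + τ • vs) hUw hrel
  have : w ∈ domOp (opSum A (normalCone (closure (domOp B)))) := ⟨_, hres⟩
  have := hfar w this
  simp at this
  linarith

end Blob
variable [NormedAddCommGroup X] [NormedSpace ℝ X] [CompleteSpace X]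

theorem stmt15 (A B : X → Set (Dual' X)) (hA : MaxMonotone A) (hB : MaxMonotone B)
    (hint : (domOp A ∩ interior (domOp B)).Nonempty)
    (hFPV : FPV (opSum A (normalCone (closure (domOp B)))))
    (hsub : domOp A ∩ closure (domOp B) ⊆ domOp B)
    (h0 : (0 : X) ∈ domOp A ∩ interior (domOp B))
    (h0A : (0 : Dual' X) ∈ A 0) (h0B : (0 : Dual' X) ∈ B 0)
    (z : X) (z' : Dual' X) (hz : fitz (opSum A B) (z, z') < ⊤) :
    ∀ l : ℝ, 0 < l → l < 1 →
      ((l ^ 2 * z' z : ℝ) : EReal) ≤ fitz (opSum A B) (l • z, l • z') := by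
  intro l hl0 hl1
  by_contra hcon
  rw [not_le] at hcon
  have h00 : (0 : Dual' X) ∈ opSum A B 0 := zero_mem_opSum h0A h0B
  -- real bound for the Fitzpatrick function at (z, z')
  obtain ⟨Mz, hMz⟩ := fitz_real_bound (opSum A B) (z, z') h00 (ne_top_of_lt hz)
  -- margin at (l • z, l • z')
  have hpair : (l • z') (l • z) = l ^ 2 * z' z := by
    simp only [ContinuousLinearMap.smul_apply, map_smul, smul_eq_mul]
    ring
  have hF0 : ((0 : ℝ) : EReal) ≤ fitz (opSum A B) (l • z, l • z') := by
    have := term_le_fitz (opSum A B) (l • z, l • z') (0, (0 : Dual' X)) h00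
    simpa using this
  have hFtop : fitz (opSum A B) (l • z, l • z') ≠ ⊤ := ne_top_of_lt hcon
  have hFbot : fitz (opSum A B) (l • z, l • z') ≠ ⊥ := fun h => by simp [h] at hF0
  have hFr : fitz (opSum A B) (l • z, l • z')
      = (((fitz (opSum A B) (l • z, l • z')).toReal : ℝ) : EReal) :=
    (EReal.coe_toReal hFtop hFbot).symm
  set Fr : ℝ := (fitz (opSum A B) (l • z, l • z')).toReal with hFrdef
  have hFrlt : Fr < l ^ 2 * z' z := by
    rw [hFr] at hcon
    exact_mod_cast hcon
  set δ : ℝ := l ^ 2 * z' z - Fr with hδdef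
  have hδ0 : 0 < δ := by rw [hδdef]; linarith
  have hFbound : ∀ (a : X) (a' : Dual' X), a' ∈ opSum A B a →
      a' (l • z) + (l • z') a - a' a ≤ Fr := by
    intro a a' ha'
    have := term_le_fitz (opSum A B) (l • z, l • z') (a, a') ha'
    rw [hFr] at this
    exact_mod_cast this
  have hmargin : ∀ (a : X) (a' : Dual' X), a' ∈ opSum A B a →
      δ ≤ ((l • z') - a') ((l • z) - a) := by
    intro a a' ha'
    have hterm := hFbound a a' ha'
    have hexp : ((l • z') - a') ((l • z) - a)
        = ((l • z') (l • z) - (l • z') a) - (a' (l • z) - a' a) := by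
      simp only [ContinuousLinearMap.sub_apply, map_sub]
      ring
    rw [hexp, hpair, hδdef]
    linarith
  -- ball around 0 inside dom B
  obtain ⟨ρ, hρ0, hρball⟩ := Metric.mem_nhds_iff.mp (mem_interior_iff_mem_nhds.mp h0.2)
  set R : ℝ := ‖z‖ + ‖l • z‖ + ρ + 10 with hRdef
  have hR0 : ‖(0 : X)‖ + 1 ≤ R := by
    rw [hRdef]; simp only [norm_zero]
    linarith [norm_nonneg z, norm_nonneg (l • z)]
  have hR1 : ‖l • z‖ + 1 ≤ R := by
    rw [hRdef]; linarith [norm_nonneg z]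
  have hG0 : (0 : X) ∈ interior (Gset B R) :=
    mem_interior.mpr ⟨Metric.ball 0 ρ, hρball.trans (domOp_subset_Gset hB.1 R),
      Metric.isOpen_ball, Metric.mem_ball_self hρ0⟩
  obtain ⟨ε₀', K₀, hε₀'0, hε₀'1, hK₀0, hK₀⟩ := loc_bound hB.1 hρ0 hρball hG0 hR0
  set ρ₀ : ℝ := min ρ ε₀' with hρ₀def
  have hρ₀0 : 0 < ρ₀ := lt_min hρ0 hε₀'0
  have hball₀ : Metric.ball (0 : X) ρ₀ ⊆ domOp B :=
    (Metric.ball_subset_ball (min_le_left _ _)).trans hρball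
  have hK₀' : ∀ y (y' : Dual' X), y' ∈ B y → ‖y‖ < ρ₀ → ‖y'‖ ≤ K₀ := by
    intro y y' hy' hyn
    apply hK₀ y y' hy'
    rw [sub_zero]
    exact lt_of_lt_of_le hyn (min_le_right _ _)
  -- z and l • z lie in the closure of dom(A + N_C)
  have hzcl : z ∈ closure (domOp (opSum A (normalCone (closure (domOp B))))) :=
    mem_closure_domT A B hB hFPV hsub h0A h0B hρ₀0 hball₀ hK₀0 hK₀' z z' Mz
      (fun a a' ha' => hMz (a, a') ha')
  have hlzcl : l • z ∈ closure (domOp (opSum A (normalCone (closure (domOp B))))) :=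
    mem_closure_domT A B hB hFPV hsub h0A h0B hρ₀0 hball₀ hK₀0 hK₀' (l • z) (l • z') Fr
      hFbound
  -- l • z lies in the interior of Gset
  have hdomTB : domOp (opSum A (normalCone (closure (domOp B)))) ⊆ domOp B := fun x hx =>
    hsub ⟨(mem_domOp_opSum_normalCone hx).1, (mem_domOp_opSum_normalCone hx).2⟩
  have hzG : z ∈ closure (Gset B R) :=
    closure_mono (hdomTB.trans (domOp_subset_Gset hB.1 R)) hzcl
  have hlzint : l • z ∈ interior (Gset B R) := by
    have := (Gset_convex B R).combo_interior_closure_mem_interior hG0 hzG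
      (a := 1 - l) (b := l) (by linarith) (by linarith) (by ring)
    simpa using this
  -- local boundedness of B around l • z
  obtain ⟨ε₁, K, hε₁0, hε₁1, hK0, hK⟩ := loc_bound hB.1 hρ0 hρball hlzint hR1
  set rf : ℝ := min ε₁ (δ / (K + 1)) with hrfdef
  have hrf0 : 0 < rf := lt_min hε₁0 (by positivity)
  -- final application of (FPV) on the small ball around l • z
  obtain ⟨y₀, hy₀T, hy₀d⟩ := Metric.mem_closure_iff.mp hlzcl rf hrf0
  have hUfdom : (Metric.ball (l • z) rf ∩
      domOp (opSum A (normalCone (closure (domOp B))))).Nonempty :=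
    ⟨y₀, by rw [Metric.mem_ball, dist_comm]; exact hy₀d, hy₀T⟩
  have hrel : ∀ y y', y' ∈ opSum A (normalCone (closure (domOp B))) y →
      y ∈ Metric.ball (l • z) rf → 0 ≤ ((l • z') - y') ((l • z) - y) := by
    intro y y' hy' hyU
    rw [opSum, Set.mem_add] at hy'
    obtain ⟨u, hu, n, hn, huny⟩ := hy'
    have hyB : y ∈ domOp B := hsub ⟨⟨u, hu⟩, hn.1⟩
    obtain ⟨bb, hbb⟩ := hyB
    have habs : bb + n ∈ B y := absorb hB hbb hn
    have hmarg := hmargin y (u + (bb + n)) (Set.add_mem_add hu habs)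
    have hdisty : ‖y - l • z‖ < rf := by
      rw [Metric.mem_ball, dist_eq_norm] at hyU
      exact hyU
    have hKb : ‖bb‖ ≤ K := hK y bb hbb (lt_of_lt_of_le hdisty (min_le_left _ _))
    have hbbb : |bb ((l • z) - y)| ≤ K * rf := by
      have h1 := bb.le_opNorm ((l • z) - y)
      rw [Real.norm_eq_abs] at h1
      have h2 : ‖(l • z) - y‖ ≤ rf := by
        rw [← norm_neg]
        simpa [neg_sub] using hdisty.le
      calc |bb ((l • z) - y)| ≤ ‖bb‖ * ‖(l • z) - y‖ := h1
      _ ≤ K * rf := mul_le_mul hKb h2 (norm_nonneg _) hK0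
    have hKrf : K * rf < δ := by
      have h1 : rf ≤ δ / (K + 1) := min_le_right _ _
      have h2 : K * rf ≤ K * (δ / (K + 1)) := mul_le_mul_of_nonneg_left h1 hK0
      have h3 : K * (δ / (K + 1)) < δ := by
        rw [mul_div_assoc']
        rw [div_lt_iff₀ (by positivity)]
        nlinarith
      linarith
    have hexp2 : ((l • z') - y') ((l • z) - y)
        = ((l • z') - (u + (bb + n))) ((l • z) - y) + bb ((l • z) - y) := by
      rw [← huny]
      simp only [ContinuousLinearMap.sub_apply, ContinuousLinearMap.add_apply]
      ring
    rw [hexp2]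
    have := neg_abs_le (bb ((l • z) - y))
    linarith
  have hres := hFPV.2 (Metric.ball (l • z) rf) Metric.isOpen_ball (convex_ball _ _)
    hUfdom (l • z) (l • z') (Metric.mem_ball_self hrf0) hrel
  rw [opSum, Set.mem_add] at hres
  obtain ⟨u, hu, n, hn, huny⟩ := hres
  have hlzB : l • z ∈ domOp B := hsub ⟨⟨u, hu⟩, hn.1⟩
  obtain ⟨bb, hbb⟩ := hlzB
  have habs : bb + n ∈ B (l • z) := absorb hB hbb hn
  have hfin := hmargin (l • z) (u + (bb + n)) (Set.add_mem_add hu habs)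
  rw [sub_self, map_zero] at hfin
  linarith
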